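/- Let D be the incidence matrix of a cycle graph with m edges oriented consistently, and let X ∈ ℝ^m be a vector with at most k nonzero entries where k < m/2. Then X is the unique minimizer of ‖Z‖₁ over all Z ∈ ℝ^m satisfying D Z = D X. In particular, for every nonzero c ∈ ℝ, ‖X‖₁ < ‖X − c𝟙‖₁. -/

import Mathlib

lemma key_ineq {m : ℕ} (X : Fin m → ℝ)
    (hsupp : 2 * (Finset.univ.filter fun i => X i ≠ 0).card < m) (c : ℝ) (hc : c ≠ 0) :
    ∑ i, |X i| < ∑ i, |X i - c| := by
  set S := Finset.univ.filter fun i => X i ≠ 0 with hS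
  have hcardc : Sᶜ.card = m - S.card := by
    simp [Finset.card_compl]
  have hle : (S.card : ℝ) + 1 ≤ (Sᶜ.card : ℝ) := by
    rw [hcardc]
    have : S.card + 1 ≤ m - S.card := by omega
    exact_mod_cast this
  have hX0 : ∑ i, |X i| = ∑ i ∈ S, |X i| :=
    (Finset.sum_subset (Finset.subset_univ S) (by
      intro i _ hi
      simp [hS] at hi
      simp [hi])).symm
  have hcompl : ∑ i ∈ Sᶜ, |X i - c| = (Sᶜ.card : ℝ) * |c| := by
    rw [Finset.sum_congr rfl (fun i hi => ?_), Finset.sum_const, nsmul_eq_mul]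
    have : X i = 0 := by
      simp [hS, Finset.mem_compl] at hi
      exact hi
    simp [this]
  have hSbound : ∑ i ∈ S, (|X i| - |c|) ≤ ∑ i ∈ S, |X i - c| :=
    Finset.sum_le_sum fun i _ => abs_sub_abs_le_abs_sub _ _
  have hsplit : ∑ i, |X i - c| = ∑ i ∈ S, |X i - c| + ∑ i ∈ Sᶜ, |X i - c| :=
    (Finset.sum_add_sum_compl S _).symm
  have hsum : ∑ i ∈ S, (|X i| - |c|) = ∑ i ∈ S, |X i| - S.card * |c| := by
    rw [Finset.sum_sub_distrib, Finset.sum_const, nsmul_eq_mul]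
  have hcpos : 0 < |c| := abs_pos.mpr hc
  rw [hX0, hsplit, hcompl]
  nlinarith [hSbound, hsum]

lemma mulVec_formula {m : ℕ} (hm : 3 ≤ m)
    (D : Matrix (Fin m) (Fin m) ℝ)
    (hD : ∀ i j, D i j =
      if (i : ℕ) = (j : ℕ) then 1 else if (i : ℕ) = ((j : ℕ) + 1) % m then -1 else 0)
    (v : Fin m → ℝ) (i : Fin m) :
    haveI : NeZero m := ⟨by omega⟩
    D.mulVec v i = v i - v (i - 1) := by
  haveI : NeZero m := ⟨by omega⟩
  have h1v : ((1 : Fin m) : ℕ) = 1 := by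
    have h1 : 1 < m := by omega
    simp [Fin.val_one', Nat.mod_eq_of_lt h1]
  have hmne : (1 : Fin m) ≠ 0 := by
    intro h
    rw [h] at h1v
    simp at h1v
  have hne : i ≠ i - 1 := by
    intro h
    have h2 : i + 1 = i := eq_sub_iff_add_eq.mp h
    exact hmne (add_eq_left.mp h2)
  have hval : ∀ j, D i j = (if j = i then (1:ℝ) else 0) + (if j = i - 1 then -1 else 0) := by
    intro j
    rw [hD]
    have e1 : ((i:ℕ) = (j:ℕ)) ↔ j = i := by rw [Fin.ext_iff]; exact eq_comm
    have e2 : ((i:ℕ) = ((j:ℕ)+1) % m) ↔ j = i - 1 := by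
      have h3 : i = j + 1 ↔ (i:ℕ) = ((j:ℕ)+1) % m := by
        rw [Fin.ext_iff, Fin.add_def, h1v]
      rw [← h3, eq_comm, eq_sub_iff_add_eq, eq_comm]
    simp only [e1, e2]
    by_cases hj1 : j = i <;> by_cases hj2 : j = i - 1
    · exact absurd (hj1.symm.trans hj2) hne
    · simp only [hj1, if_true, if_pos rfl]
      simp [hj2, hne]
    · have hm1 : m ≠ 1 := by omega
      simp [hj1, hj2, hm1]
    · simp [hj1, hj2]
  simp only [Matrix.mulVec, dotProduct, hval, add_mul, ite_mul, one_mul, zero_mul,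
    neg_one_mul, Finset.sum_add_distrib, Finset.sum_ite_eq', Finset.mem_univ, if_true]
  ring

/-- For the incidence matrix of a consistently oriented cycle with `m` edges and a
vector `X` with fewer than `m/2` nonzero entries, `X` is the unique ℓ¹ minimizer
among all `Z` with `D Z = D X`; in particular `‖X‖₁ < ‖X − c𝟙‖₁` for all `c ≠ 0`. -/
theorem cycle_l1_unique_minimizer {m : ℕ} (hm : 3 ≤ m)
    (D : Matrix (Fin m) (Fin m) ℝ)
    (hD : ∀ i j, D i j =
      if (i : ℕ) = (j : ℕ) then 1 else if (i : ℕ) = ((j : ℕ) + 1) % m then -1 else 0)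
    (X : Fin m → ℝ)
    (hsupp : 2 * (Finset.univ.filter fun i => X i ≠ 0).card < m) :
    (∀ Z : Fin m → ℝ, D.mulVec Z = D.mulVec X → Z ≠ X →
      ∑ i, |X i| < ∑ i, |Z i|) ∧
    (∀ c : ℝ, c ≠ 0 → ∑ i, |X i| < ∑ i, |X i - c|) := by
  haveI : NeZero m := ⟨by omega⟩
  constructor
  · intro Z hZX hne
    set v : Fin m → ℝ := fun i => Z i - X i with hv
    have hrec : ∀ i : Fin m, v i = v (i - 1) := by
      intro i
      have h1 := mulVec_formula hm D hD Z i
      have h2 := mulVec_formula hm D hD X i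
      have h3 : D.mulVec Z i = D.mulVec X i := by rw [hZX]
      simp only [hv]
      rw [h1, h2] at h3
      linarith
    have h1v : ((1 : Fin m) : ℕ) = 1 := by
      have h1 : 1 < m := by omega
      simp [Fin.val_one', Nat.mod_eq_of_lt h1]
    have hconst : ∀ i : Fin m, v i = v 0 := by
      have key : ∀ n : ℕ, ∀ hn : n < m, v ⟨n, hn⟩ = v 0 := by
        intro n
        induction n with
        | zero =>
          intro hn
          have h0 : (⟨0, hn⟩ : Fin m) = 0 := Fin.ext (by simp)
          rw [h0]
        | succ k ih =>
          intro hn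
          have hk : k < m := by omega
          have hsub : (⟨k+1, hn⟩ : Fin m) - 1 = ⟨k, hk⟩ := by
            apply Fin.ext
            rw [Fin.sub_def]
            simp only [h1v]
            have h4 : m - 1 + (k + 1) = k + m := by omega
            simp only [h4]
            rw [Nat.add_mod_right, Nat.mod_eq_of_lt hk]
          rw [hrec ⟨k+1, hn⟩, hsub, ih hk]
      intro i
      have := key i.val i.isLt
      simpa using this
    set c : ℝ := v 0 with hc
    have hZ : ∀ i, Z i = X i + c := by
      intro i
      have := hconst i
      simp only [hv] at this
      linarith [this]
    have hc0 : c ≠ 0 := by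
      intro h
      apply hne
      funext i
      rw [hZ i, h, add_zero]
    have hsum : ∑ i, |Z i| = ∑ i, |X i - (-c)| := by
      apply Finset.sum_congr rfl
      intro i _
      rw [hZ i, sub_neg_eq_add]
    rw [hsum]
    exact key_ineq X hsupp (-c) (neg_ne_zero.mpr hc0)
  · intro c hc
    exact key_ineq X hsupp c hc
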